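/- arXiv:2302.09888 — 4 statements merged into one kernel-verified Lean document; each statement's English description precedes it below -/
import Mathlib

section
/- For every real load A > 0 and every natural number n, the Erlang B blocking probability is strictly decreasing in the number of servers: B(n+1, A) < B(n, A). -/
/-- The Erlang B blocking probability with offered load `A` and `n` servers:
`B(n, A) = (A^n / n!) / (∑_{i=0}^{n} A^i / i!)`. -/
noncomputable def ErlangB (A : ℝ) (n : ℕ) : ℝ :=
  (A ^ n / n.factorial) / (∑ i ∈ Finset.range (n + 1), A ^ i / i.factorial)

/-- For every load `A > 0` and every `n`, the Erlang B blocking probability is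
strictly decreasing in the number of servers: `B(n+1, A) < B(n, A)`. -/
theorem erlangB_strictAnti (A : ℝ) (hA : 0 < A) (n : ℕ) :
    ErlangB A (n + 1) < ErlangB A n := by
  have hSpos : ∀ k : ℕ, 0 < ∑ i ∈ Finset.range (k + 1), A ^ i / i.factorial := by
    intro k
    apply Finset.sum_pos
    · intro i _
      positivity
    · exact ⟨0, Finset.mem_range.mpr (Nat.succ_pos k)⟩
  set S : ℕ → ℝ := fun k => ∑ i ∈ Finset.range (k + 1), A ^ i / i.factorial with hS
  have key : A * S n < (n + 1 : ℝ) * S (n + 1) := by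
    have h1 : A * S n = ∑ i ∈ Finset.range (n + 1), A ^ (i + 1) / i.factorial := by
      rw [hS, Finset.mul_sum]
      apply Finset.sum_congr rfl
      intro i _
      rw [pow_succ]
      ring
    have h2 : ∀ i ∈ Finset.range (n + 1),
        A ^ (i + 1) / i.factorial ≤ (n + 1 : ℝ) * (A ^ (i + 1) / (i + 1).factorial) := by
      intro i hi
      have hin : i + 1 ≤ n + 1 := Finset.mem_range.mp hi
      have hi' : (i : ℝ) + 1 ≤ (n : ℝ) + 1 := by exact_mod_cast hin
      have hfact : ((i + 1).factorial : ℝ) = ((i : ℝ) + 1) * (i.factorial : ℝ) := by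
        rw [Nat.factorial_succ]; push_cast; ring
      have hif : (0 : ℝ) < i.factorial := by positivity
      have hi1 : (0 : ℝ) < (i : ℝ) + 1 := by positivity
      have e : (n + 1 : ℝ) * (A ^ (i + 1) / ((i + 1).factorial : ℝ))
          = ((n : ℝ) + 1) / ((i : ℝ) + 1) * (A ^ (i + 1) / i.factorial) := by
        rw [hfact]; field_simp
      rw [e]
      have h1le : 1 ≤ ((n : ℝ) + 1) / ((i : ℝ) + 1) := (one_le_div hi1).mpr hi'
      calc A ^ (i + 1) / (i.factorial : ℝ) = 1 * (A ^ (i + 1) / i.factorial) := (one_mul _).symm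
        _ ≤ ((n : ℝ) + 1) / ((i : ℝ) + 1) * (A ^ (i + 1) / i.factorial) := by
            apply mul_le_mul_of_nonneg_right h1le; positivity
    have h4 : S (n + 1) = (∑ i ∈ Finset.range (n + 1), A ^ (i + 1) / (i + 1).factorial) + 1 := by
      rw [hS]
      simp only
      rw [Finset.sum_range_succ' (fun i => A ^ i / (i.factorial : ℝ)) (n + 1)]
      simp
    calc A * S n = ∑ i ∈ Finset.range (n + 1), A ^ (i + 1) / i.factorial := h1
      _ ≤ ∑ i ∈ Finset.range (n + 1), (n + 1 : ℝ) * (A ^ (i + 1) / (i + 1).factorial) :=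
          Finset.sum_le_sum h2
      _ = (n + 1 : ℝ) * ∑ i ∈ Finset.range (n + 1), A ^ (i + 1) / (i + 1).factorial := by
          rw [Finset.mul_sum]
      _ < (n + 1 : ℝ) * S (n + 1) := by
          rw [h4]
          have : (0 : ℝ) < (n : ℝ) + 1 := by positivity
          nlinarith
  unfold ErlangB
  rw [div_lt_div_iff₀ (hSpos (n + 1)) (hSpos n)]
  have hfact : ((n + 1).factorial : ℝ) = ((n : ℝ) + 1) * (n.factorial : ℝ) := by
    rw [Nat.factorial_succ]; push_cast; ring
  have hnf : (0 : ℝ) < n.factorial := by positivity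
  have hApos : (0 : ℝ) < A ^ n := by positivity
  have lhs_eq : A ^ (n + 1) / ((n + 1).factorial : ℝ) * S n
      = (A ^ n / n.factorial) * (A * S n / ((n : ℝ) + 1)) := by
    rw [hfact, pow_succ]
    field_simp
  have rhs_eq : A ^ n / (n.factorial : ℝ) * S (n + 1)
      = (A ^ n / n.factorial) * S (n + 1) := rfl
  rw [lhs_eq]
  apply mul_lt_mul_of_pos_left _ (by positivity)
  rw [div_lt_iff₀ (by positivity : (0:ℝ) < (n:ℝ) + 1)]
  linarith [key]
end

section
/- For every real load A > 0 and every natural number n, the Erlang B blocking probability is discretely convex in the number of servers: B(n, A) + B(n+2, A) ≥ 2 · B(n+1, A). Equivalently, the complementary probability n ↦ 1 − B(n, A) has nonincreasing increments: (1 − B(n+2, A)) − (1 − B(n+1, A)) ≤ (1 − B(n+1, A)) − (1 − B(n, A)). -/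
/-- The normalized inverse of the Erlang B formula: `C n = n! * (∑ A^i/i!) / A^n`. -/
noncomputable def erlangC (A : ℝ) (n : ℕ) : ℝ :=
  (n.factorial : ℝ) * (∑ i ∈ Finset.range (n + 1), A ^ i / i.factorial) / A ^ n

/-- Auxiliary sequence: `W n = C n / (C (n+1) - C n)`, defined by its recursion. -/
noncomputable def erlangW (A : ℝ) : ℕ → ℝ
  | 0 => A
  | n + 1 => A * (erlangW A n + 1) / (erlangW A n + (n : ℝ) + 2)

lemma erlangSum_pos (A : ℝ) (hA : 0 < A) (n : ℕ) :
    0 < ∑ i ∈ Finset.range (n + 1), A ^ i / i.factorial := by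
  apply Finset.sum_pos
  · intro i _
    positivity
  · exact ⟨0, Finset.mem_range.2 (Nat.succ_pos n)⟩

lemma erlangC_pos (A : ℝ) (hA : 0 < A) (n : ℕ) : 0 < erlangC A n := by
  have := erlangSum_pos A hA n
  have : (0:ℝ) < (n.factorial : ℝ) := by positivity
  unfold erlangC
  positivity

lemma erlangC_zero (A : ℝ) (hA : 0 < A) : erlangC A 0 = 1 := by
  simp [erlangC]

lemma erlangC_rec (A : ℝ) (hA : 0 < A) (n : ℕ) :
    A * erlangC A (n + 1) = A + ((n : ℝ) + 1) * erlangC A n := by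
  have hAne : A ≠ 0 := ne_of_gt hA
  have hpow : A ^ n ≠ 0 := pow_ne_zero _ hAne
  have hfac : ((n.factorial : ℝ)) ≠ 0 := by positivity
  have hfac1 : (((n+1).factorial : ℝ)) ≠ 0 := by positivity
  unfold erlangC
  rw [Finset.sum_range_succ]
  push_cast [Nat.factorial_succ, pow_succ]
  field_simp
  ring

lemma erlangB_eq (A : ℝ) (hA : 0 < A) (n : ℕ) : ErlangB A n = 1 / erlangC A n := by
  have hS := erlangSum_pos A hA n
  have hSne : (∑ i ∈ Finset.range (n + 1), A ^ i / i.factorial) ≠ 0 := ne_of_gt hS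
  have hAne : A ≠ 0 := ne_of_gt hA
  have hfac : ((n.factorial : ℝ)) ≠ 0 := by positivity
  unfold ErlangB erlangC
  field_simp

lemma erlangW_pos (A : ℝ) (hA : 0 < A) (n : ℕ) : 0 < erlangW A n := by
  induction n with
  | zero => exact hA
  | succ n ih =>
      show 0 < A * (erlangW A n + 1) / (erlangW A n + (n : ℝ) + 2)
      have h2 : (0:ℝ) < erlangW A n + (n : ℝ) + 2 := by positivity
      positivity

lemma erlangW_rec (A : ℝ) (hA : 0 < A) (n : ℕ) :
    erlangW A (n + 1) * (erlangW A n + (n : ℝ) + 2) = A * (erlangW A n + 1) := by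
  have hW := erlangW_pos A hA n
  have h2 : (erlangW A n + (n : ℝ) + 2) ≠ 0 := by positivity
  show A * (erlangW A n + 1) / (erlangW A n + (n : ℝ) + 2) *
      (erlangW A n + (n : ℝ) + 2) = A * (erlangW A n + 1)
  field_simp

/-- Key identity: `W n * (C (n+1) - C n) = C n`. -/
lemma erlangWC (A : ℝ) (hA : 0 < A) (n : ℕ) :
    erlangW A n * (erlangC A (n + 1) - erlangC A n) = erlangC A n := by
  induction n with
  | zero =>
      have h1 := erlangC_rec A hA 0
      have h0 := erlangC_zero A hA
      have hAne : A ≠ 0 := ne_of_gt hA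
      show A * (erlangC A 1 - erlangC A 0) = erlangC A 0
      rw [h0] at h1 ⊢
      push_cast at h1
      linarith [h1]
  | succ n ih =>
      have h1 := erlangC_rec A hA n
      have h2 := erlangC_rec A hA (n + 1)
      have hWrec := erlangW_rec A hA n
      have hW := erlangW_pos A hA n
      have hW1 := erlangW_pos A hA (n + 1)
      have hAne : A ≠ 0 := ne_of_gt hA
      -- goal: W (n+1) * (C (n+2) - C (n+1)) = C (n+1)
      -- multiply through by A and use hWrec
      have hden : (erlangW A n + (n : ℝ) + 2) ≠ 0 := by positivity
      have key : A * (erlangW A (n+1) * (erlangC A (n + 2) - erlangC A (n+1)))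
          * (erlangW A n + (n : ℝ) + 2)
          = A * erlangC A (n+1) * (erlangW A n + (n : ℝ) + 2) := by
        push_cast at h1 h2 ⊢
        linear_combination ((erlangW A n + 1) * A) * h2 - ((erlangW A n + 1) * A) * h1 +
          (((n : ℝ) + 1) * A) * ih +
          ((erlangC A (n + 2) - erlangC A (n + 1)) * A) * hWrec
      have hA2 : A * (erlangW A n + (n : ℝ) + 2) ≠ 0 := by positivity
      have goal' : (A * (erlangW A n + (n : ℝ) + 2)) *
          (erlangW A (n+1) * (erlangC A (n + 2) - erlangC A (n+1)))
          = (A * (erlangW A n + (n : ℝ) + 2)) * erlangC A (n+1) := by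
        linear_combination key
      exact mul_left_cancel₀ hA2 goal'

/-- The main discrete inequality on `W`: `A (W n + 1) ≥ (W n - 1)(W n + n + 2)`. -/
lemma erlangJ (A : ℝ) (hA : 0 < A) (n : ℕ) :
    0 ≤ A * (erlangW A n + 1) - (erlangW A n - 1) * (erlangW A n + (n : ℝ) + 2) := by
  induction n with
  | zero =>
      show (0:ℝ) ≤ A * (A + 1) - (A - 1) * (A + (0 : ℕ) + 2)
      push_cast
      nlinarith
  | succ n ih =>
      set W := erlangW A n with hWdef
      have hW : 0 < W := erlangW_pos A hA n
      have hWrec := erlangW_rec A hA n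
      set W' := erlangW A (n + 1) with hW'def
      have hs : (0:ℝ) < W + (n : ℝ) + 2 := by positivity
      -- the SOS certificate identity
      have key : (W + 1) * (W + (n : ℝ) + 2) ^ 2 *
          (A * (W' + 1) - (W' - 1) * (W' + ((n : ℝ) + 1) + 2))
          = ((n : ℝ) + 1) *
              ((A * (W + 1) - (W - 1) * (W + (n : ℝ) + 2)) - (W + (n : ℝ) + 2)) ^ 2
            + (W + (n : ℝ) + 2) ^ 2 * (2 * W + ((n : ℝ) + 2) + 1)
            + ((n : ℝ) + 1) * (W + (n : ℝ) + 2) * W *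
                (A * (W + 1) - (W - 1) * (W + (n : ℝ) + 2)) := by
        linear_combination (-(W + 1) * ((W + (n:ℝ) + 2) * W' + ((n:ℝ) + 2) * (W + (n:ℝ) + 2)
          - A * ((n:ℝ) + 1))) * hWrec
      have hrhs : (0:ℝ) ≤ ((n : ℝ) + 1) *
              ((A * (W + 1) - (W - 1) * (W + (n : ℝ) + 2)) - (W + (n : ℝ) + 2)) ^ 2
            + (W + (n : ℝ) + 2) ^ 2 * (2 * W + ((n : ℝ) + 2) + 1)
            + ((n : ℝ) + 1) * (W + (n : ℝ) + 2) * W *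
                (A * (W + 1) - (W - 1) * (W + (n : ℝ) + 2)) := by
        have t1 : (0:ℝ) ≤ ((n : ℝ) + 1) *
            ((A * (W + 1) - (W - 1) * (W + (n : ℝ) + 2)) - (W + (n : ℝ) + 2)) ^ 2 := by
          positivity
        have t2 : (0:ℝ) ≤ (W + (n : ℝ) + 2) ^ 2 * (2 * W + ((n : ℝ) + 2) + 1) := by
          positivity
        have t3 : (0:ℝ) ≤ ((n : ℝ) + 1) * (W + (n : ℝ) + 2) * W *
            (A * (W + 1) - (W - 1) * (W + (n : ℝ) + 2)) := by
          apply mul_nonneg _ ih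
          positivity
        linarith
      have hpos : (0:ℝ) < (W + 1) * (W + (n : ℝ) + 2) ^ 2 := by positivity
      by_contra hcon
      push_neg at hcon
      have hlt : A * (W' + 1) - (W' - 1) * (W' + ((n : ℝ) + 1) + 2) < 0 := by
        push_cast at hcon ⊢
        linarith
      nlinarith [mul_pos hpos (neg_pos.2 hlt)]

/-- For every load `A > 0` and every `n`, the Erlang B blocking probability is discretely
convex in the number of servers: `B(n, A) + B(n+2, A) ≥ 2 · B(n+1, A)`; equivalently,
`n ↦ 1 − B(n, A)` has nonincreasing increments. -/
theorem erlangB_discrete_convex (A : ℝ) (hA : 0 < A) (n : ℕ) :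
    ErlangB A n + ErlangB A (n + 2) ≥ 2 * ErlangB A (n + 1) ∧
    (1 - ErlangB A (n + 2)) - (1 - ErlangB A (n + 1)) ≤
      (1 - ErlangB A (n + 1)) - (1 - ErlangB A n) := by
  have hC0 : 0 < erlangC A n := erlangC_pos A hA n
  have hC1 : 0 < erlangC A (n + 1) := erlangC_pos A hA (n + 1)
  have hC2 : 0 < erlangC A (n + 2) := erlangC_pos A hA (n + 2)
  have hW0 : 0 < erlangW A n := erlangW_pos A hA n
  have hW1 : 0 < erlangW A (n + 1) := erlangW_pos A hA (n + 1)
  have h0 := erlangWC A hA n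
  have h1 := erlangWC A hA (n + 1)
  have hJ := erlangJ A hA n
  have hWrec := erlangW_rec A hA n
  have hs : (0:ℝ) < erlangW A n + (n : ℝ) + 2 := by positivity
  -- W (n+1) + 1 ≥ W n
  have hmono : erlangW A n ≤ erlangW A (n + 1) + 1 := by
    nlinarith [hWrec, hJ, hs]
  -- W(n+1) * C(n+2) ≥ W(n) * C(n+1)
  have hkey : erlangW A n * erlangC A (n + 1) ≤ erlangW A (n + 1) * erlangC A (n + 2) := by
    nlinarith [h1, hmono, hC1]
  -- main polynomial inequality
  have hE : 0 ≤ erlangC A (n+1) * (erlangC A n + erlangC A (n+2))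
      - 2 * erlangC A n * erlangC A (n+2) := by
    have h5 : erlangW A n * erlangW A (n+1) *
        (erlangC A (n+1) * (erlangC A n + erlangC A (n+2))
          - 2 * erlangC A n * erlangC A (n+2))
        = erlangC A n * (erlangW A (n+1) * erlangC A (n+2)
            - erlangW A n * erlangC A (n+1)) := by
      linear_combination (erlangW A (n+1) * erlangC A (n+2)) * h0
        - (erlangW A n * erlangC A n) * h1
    have h6 : 0 ≤ erlangC A n * (erlangW A (n+1) * erlangC A (n+2)
        - erlangW A n * erlangC A (n+1)) := by
      apply mul_nonneg hC0.le
      linarith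
    have hpos : 0 < erlangW A n * erlangW A (n+1) := mul_pos hW0 hW1
    by_contra hcon
    push_neg at hcon
    nlinarith [mul_pos hpos (neg_pos.2 hcon)]
  have e0 := erlangB_eq A hA n
  have e1 := erlangB_eq A hA (n + 1)
  have e2 := erlangB_eq A hA (n + 2)
  have hmain : ErlangB A n + ErlangB A (n + 2) ≥ 2 * ErlangB A (n + 1) := by
    rw [e0, e1, e2]
    rw [ge_iff_le, div_add_div _ _ (ne_of_gt hC0) (ne_of_gt hC2)]
    rw [mul_one_div, div_le_div_iff₀ hC1 (by positivity)]
    nlinarith [hE]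
  exact ⟨hmain, by linarith [hmain]⟩
end

section
/- (Theorem 1, monotonicity) The objective function f(S) = ∑_{p=1}^P w_p · (1 − B(|S ∩ V_p|, A_p)) is monotone: if S ⊆ T ⊆ V then f(S) ≤ f(T). -/
open Finset

lemma telescope_key (A : ℝ) (hA : 0 ≤ A) :
    ∀ n : ℕ, ∑ i ∈ range (n + 1), (A - (i + 1)) * (A ^ i / i.factorial)
      ≤ A ^ (n + 1) / n.factorial := by
  intro n
  induction n with
  | zero => simp
  | succ n ih =>
      rw [Finset.sum_range_succ]
      push_cast
      have hfac : ((n + 1).factorial : ℝ) = (n + 1) * n.factorial := by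
        push_cast [Nat.factorial_succ]; ring
      have hx : (0:ℝ) ≤ A ^ (n + 1) := pow_nonneg hA _
      have hf : (0:ℝ) < n.factorial := by positivity
      have key : A ^ (n + 1) / n.factorial + (A - (↑n + 1 + 1)) * (A ^ (n + 1) / (n + 1).factorial)
          ≤ A ^ (n + 1 + 1) / (n + 1).factorial := by
        rw [hfac, mul_div_assoc', div_add_div _ _ hf.ne' (by positivity),
          div_le_div_iff₀ (by positivity) (by positivity)]
        rw [show A ^ (n + 1 + 1) = A * A ^ (n + 1) from by ring]
        nlinarith [mul_nonneg (mul_nonneg hx hf.le) hf.le, mul_nonneg hx hf.le,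
          mul_nonneg (mul_nonneg (mul_nonneg hx hf.le) hf.le) (by positivity : (0:ℝ) ≤ (n:ℝ)+1)]
      exact le_trans (add_le_add_left ih _) key

lemma sumD_pos (A : ℝ) (hA : 0 < A) (n : ℕ) :
    0 < ∑ i ∈ range (n + 1), A ^ i / i.factorial :=
  Finset.sum_pos (fun i _ => by positivity) nonempty_range_add_one

lemma htel (A : ℝ) (hA : 0 < A) (n : ℕ) :
    (A - (n + 1)) * (∑ i ∈ range (n + 1), A ^ i / i.factorial) ≤ A ^ (n + 1) / n.factorial := by
  rcases le_or_gt A (n + 1) with h | h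
  · have h1 : (A - (n + 1)) * (∑ i ∈ range (n + 1), A ^ i / i.factorial) ≤ 0 :=
      mul_nonpos_of_nonpos_of_nonneg (by linarith) (sumD_pos A hA n).le
    have h2 : (0:ℝ) ≤ A ^ (n + 1) / n.factorial := by positivity
    linarith
  · calc (A - (n + 1)) * (∑ i ∈ range (n + 1), A ^ i / i.factorial)
        = ∑ i ∈ range (n + 1), (A - (n + 1)) * (A ^ i / i.factorial) := by
          rw [Finset.mul_sum]
      _ ≤ ∑ i ∈ range (n + 1), (A - (i + 1)) * (A ^ i / i.factorial) := by
          apply Finset.sum_le_sum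
          intro i hi
          have hin : i ≤ n := Nat.lt_succ_iff.mp (Finset.mem_range.mp hi)
          have hin' : (i : ℝ) ≤ (n : ℝ) := Nat.cast_le.mpr hin
          apply mul_le_mul_of_nonneg_right (by linarith) (by positivity)
      _ ≤ A ^ (n + 1) / n.factorial := telescope_key A hA.le n

lemma arith_key (A c s t D : ℝ) (hc : 0 < c) (hs : 0 ≤ s)
    (h1 : c * t = A * s) (h2 : (A - c) * D ≤ c * t) : t * D ≤ s * (D + t) := by
  have h3 := mul_le_mul_of_nonneg_left h2 hs
  have h4 : c * (t * D) = A * s * D := by rw [← mul_assoc, h1]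
  have h5 : c * (t * D) ≤ c * (s * (D + t)) := by nlinarith [h3, h4]
  exact le_of_mul_le_mul_left h5 hc

lemma ErlangB_step (A : ℝ) (hA : 0 < A) (n : ℕ) :
    ErlangB A (n + 1) ≤ ErlangB A n := by
  unfold ErlangB
  have hD : 0 < ∑ i ∈ range (n + 1), A ^ i / i.factorial := sumD_pos A hA n
  have ht : (0:ℝ) < A ^ (n + 1) / (n + 1).factorial := by positivity
  rw [Finset.sum_range_succ, div_le_div_iff₀ (by linarith) hD]
  apply arith_key A ((n:ℝ) + 1) _ _ _ (by positivity) (by positivity)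
  · rw [show ((n + 1).factorial : ℝ) = (n + 1) * n.factorial from by
      push_cast [Nat.factorial_succ]; ring, pow_succ]
    have hf : (0:ℝ) < n.factorial := by positivity
    field_simp
  · have h1 : ((n:ℝ) + 1) * (A ^ (n + 1) / (n + 1).factorial) = A ^ (n + 1) / n.factorial := by
      rw [show ((n + 1).factorial : ℝ) = (n + 1) * n.factorial from by
        push_cast [Nat.factorial_succ]; ring]
      have hf : (0:ℝ) < n.factorial := by positivity
      field_simp
    rw [h1]
    exact htel A hA n

lemma ErlangB_antitone (A : ℝ) (hA : 0 < A) {n m : ℕ} (h : n ≤ m) :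
    ErlangB A m ≤ ErlangB A n := by
  induction m, h using Nat.le_induction with
  | base => exact le_refl _
  | succ m hm ih => exact le_trans (ErlangB_step A hA m) ih

/-- (Theorem 1, monotonicity) With pairwise disjoint candidate-session sets `V p` whose
union is `Vall`, offered loads `A p > 0` and weights `w p ≥ 0`, the objective
`f(S) = ∑_p w p · (1 − B(|S ∩ V p|, A p))` is monotone: `S ⊆ T ⊆ Vall` implies
`f(S) ≤ f(T)`. -/
theorem objective_monotone {α : Type*} [DecidableEq α] (P : ℕ)
    (V : Fin P → Finset α) (hdisj : ∀ p q : Fin P, p ≠ q → Disjoint (V p) (V q))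
    (Vall : Finset α) (hV : Vall = Finset.univ.biUnion V)
    (A : Fin P → ℝ) (hA : ∀ p, 0 < A p)
    (w : Fin P → ℝ) (hw : ∀ p, 0 ≤ w p)
    (S T : Finset α) (hST : S ⊆ T) (hT : T ⊆ Vall) :
    ∑ p, w p * (1 - ErlangB (A p) (S ∩ V p).card) ≤
      ∑ p, w p * (1 - ErlangB (A p) (T ∩ V p).card) := by
  apply Finset.sum_le_sum
  intro p _
  apply mul_le_mul_of_nonneg_left _ (hw p)
  have hcard : (S ∩ V p).card ≤ (T ∩ V p).card :=
    Finset.card_le_card (Finset.inter_subset_inter hST Finset.Subset.rfl)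
  have := ErlangB_antitone (A p) (hA p) hcard
  linarith
end

section
/- (Theorem 1, submodularity) The objective function f(S) = ∑_{p=1}^P w_p · (1 − B(|S ∩ V_p|, A_p)) is submodular: for all S ⊆ T ⊆ V and all v ∈ V \ T, f(T ∪ {v}) − f(T) ≤ f(S ∪ {v}) − f(S). -/
namespace ErlangAux

noncomputable def tm (A : ℝ) (n : ℕ) : ℝ := A ^ n / n.factorial

noncomputable def sg (A : ℝ) (n : ℕ) : ℝ := ∑ i ∈ Finset.range (n + 1), A ^ i / i.factorial

noncomputable def Mm (A : ℝ) (n : ℕ) : ℝ := ∑ i ∈ Finset.range (n + 1), sg A i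

lemma tm_pos {A : ℝ} (hA : 0 < A) (n : ℕ) : 0 < tm A n := by
  unfold tm
  positivity

lemma sg_succ (A : ℝ) (n : ℕ) : sg A (n + 1) = sg A n + tm A (n + 1) := by
  unfold sg tm
  rw [Finset.sum_range_succ]

lemma sg_pos {A : ℝ} (hA : 0 < A) (n : ℕ) : 0 < sg A n := by
  unfold sg
  apply Finset.sum_pos
  · intro i _
    positivity
  · exact Finset.nonempty_range_iff.mpr (Nat.succ_ne_zero n)

lemma Mm_succ (A : ℝ) (n : ℕ) : Mm A (n + 1) = Mm A n + sg A (n + 1) := by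
  unfold Mm
  rw [Finset.sum_range_succ]

lemma Mm_pos {A : ℝ} (hA : 0 < A) (n : ℕ) : 0 < Mm A n := by
  unfold Mm
  apply Finset.sum_pos
  · intro i _
    exact sg_pos hA i
  · exact Finset.nonempty_range_iff.mpr (Nat.succ_ne_zero n)

lemma tm_rec (A : ℝ) (n : ℕ) : A * tm A n = ((n : ℝ) + 1) * tm A (n + 1) := by
  unfold tm
  rw [Nat.factorial_succ]
  push_cast
  have h : ((n : ℝ) + 1) ≠ 0 := by positivity
  have h2 : (n.factorial : ℝ) ≠ 0 := by
    exact_mod_cast Nat.factorial_ne_zero n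
  field_simp
  ring

lemma sg_mono_le {A : ℝ} (hA : 0 < A) {m n : ℕ} (h : m ≤ n) : sg A m ≤ sg A n := by
  unfold sg
  apply Finset.sum_le_sum_of_subset_of_nonneg
  · exact Finset.range_subset_range.mpr (by omega)
  · intro i _ _
    positivity

lemma key_id {A : ℝ} (hA : 0 < A) (n : ℕ) :
    A * sg A n + Mm A n = ((n : ℝ) + 1) * sg A (n + 1) := by
  induction n with
  | zero =>
    simp [sg, Mm, tm, Finset.sum_range_succ]
    ring
  | succ n ih =>
    rw [Mm_succ, sg_succ A (n+1), mul_add, ← tm_rec]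
    push_cast
    linear_combination ih + A * (sg_succ A n)

lemma Mm_le {A : ℝ} (hA : 0 < A) (n : ℕ) : Mm A n ≤ ((n : ℝ) + 1) * sg A (n + 1) := by
  unfold Mm
  calc ∑ i ∈ Finset.range (n + 1), sg A i
      ≤ ∑ _i ∈ Finset.range (n + 1), sg A (n + 1) := by
        apply Finset.sum_le_sum
        intro i hi
        exact sg_mono_le hA (by simp at hi; omega)
    _ = ((n : ℝ) + 1) * sg A (n + 1) := by
        rw [Finset.sum_const, Finset.card_range]
        push_cast
        ring

noncomputable def slk (A : ℝ) (n : ℕ) : ℝ :=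
  Mm A n ^ 2 + A * tm A (n + 1) * Mm A n + 2 * sg A (n + 1) * Mm A n
    - ((n : ℝ) + 1) * sg A (n + 1) ^ 2

lemma slk_zero (A : ℝ) : slk A 0 = 2 := by
  unfold slk Mm sg tm
  simp [Finset.sum_range_succ]
  ring


lemma slk_nonneg {A : ℝ} (hA : 0 < A) (n : ℕ) : 0 ≤ slk A n := by
  induction n with
  | zero => rw [slk_zero]; norm_num
  | succ n ih =>
    -- abbreviations
    set M := Mm A n with hM_def
    set s := sg A (n + 1) with hs_def
    set u := tm A (n + 2) with hu_def
    have hMpos : 0 < M := Mm_pos hA n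
    have hspos : 0 < s := sg_pos hA (n + 1)
    have hupos : 0 < u := tm_pos hA (n + 2)
    have hMle : M ≤ ((n : ℝ) + 1) * s := Mm_le hA n
    -- A * tm (n+1) = (n+2) * u
    have htr : A * tm A (n + 1) = ((n : ℝ) + 2) * u := by
      have := tm_rec A (n + 1)
      push_cast at this
      linarith [this]
    -- relation : A * s = (n+1)*s + (n+2)*u - M
    have hrel : A * s = ((n : ℝ) + 1) * s + ((n : ℝ) + 2) * u - M := by
      have hk := key_id hA (n + 1)
      rw [Mm_succ, sg_succ A (n + 1)] at hk
      push_cast at hk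
      linarith [hk]
    -- slack at level n, rewritten
    set L := slk A n with hL_def
    have hLform : L = M ^ 2 + ((n : ℝ) + 2) * u * M + 2 * s * M - ((n : ℝ) + 1) * s ^ 2 := by
      rw [hL_def]
      unfold slk
      rw [htr]
    -- goal : 0 ≤ slk A (n+1)
    have hgoal_form : slk A (n + 1)
        = (M + s) ^ 2 + A * u * (M + s) + 2 * (s + u) * (M + s) - ((n : ℝ) + 2) * (s + u) ^ 2 := by
      unfold slk
      rw [Mm_succ, sg_succ A (n + 1)]
      push_cast
      ring
    rw [hgoal_form]
    -- master identity
    set t2 : ℝ := ((n : ℝ) + 1) * s ^ 2 + ((n : ℝ) - 2) * s * M - 3 * M ^ 2 with ht2_def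
    have hmaster : ((n : ℝ) + 2) * M * s *
        ((M + s) ^ 2 + A * u * (M + s) + 2 * (s + u) * (M + s) - ((n : ℝ) + 2) * (s + u) ^ 2)
        = L ^ 2 + t2 * L + 2 * M * (M + s) ^ 3 := by
      rw [hLform, ht2_def]
      linear_combination (((n : ℝ) + 2) * M * u * (M + s)) * hrel
    have hRHS : 0 ≤ L ^ 2 + t2 * L + 2 * M * (M + s) ^ 3 := by
      rcases le_or_gt 0 t2 with ht | ht
      · have h1 : 0 ≤ t2 * L := mul_nonneg ht ih
        nlinarith [sq_nonneg L, mul_pos hMpos (pow_pos (by linarith : (0:ℝ) < M + s) 3)]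
      · have h2 : -t2 ≤ 2 * M * (M + s) := by
          nlinarith [mul_le_mul_of_nonneg_left hMle hMpos.le,
            mul_le_mul_of_nonneg_left hMle hspos.le]
        have h3 : 0 ≤ (t2 + 2 * M * (M + s)) * L := mul_nonneg (by linarith) ih
        nlinarith [sq_nonneg (L - M * (M + s)),
          mul_pos (mul_pos hMpos (mul_pos (by linarith : (0:ℝ) < M + s) (by linarith : (0:ℝ) < M + s))) (by linarith : (0:ℝ) < M + 2 * s)]
    have hfac : 0 < ((n : ℝ) + 2) * M * s := by positivity
    have h0 : 0 ≤ ((n : ℝ) + 2) * M * s *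
        ((M + s) ^ 2 + A * u * (M + s) + 2 * (s + u) * (M + s) - ((n : ℝ) + 2) * (s + u) ^ 2) := by
      rw [hmaster]; exact hRHS
    exact nonneg_of_mul_nonneg_right h0 hfac


lemma erlangB_eq (A : ℝ) (n : ℕ) : ErlangB A n = tm A n / sg A n := rfl

lemma erlang_convex {A : ℝ} (hA : 0 < A) (n : ℕ) :
    ErlangB A (n + 1) - ErlangB A (n + 2) ≤ ErlangB A n - ErlangB A (n + 1) := by
  have hA' : A ≠ 0 := hA.ne'
  have hs0p : 0 < sg A n := sg_pos hA n
  have hs1p : 0 < sg A (n + 1) := sg_pos hA (n + 1)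
  have hs2p : 0 < sg A (n + 2) := sg_pos hA (n + 2)
  have ht1p : 0 < tm A (n + 1) := tm_pos hA (n + 1)
  have e1 : tm A n = ((n : ℝ) + 1) * tm A (n + 1) / A := by
    rw [eq_div_iff hA']
    linear_combination tm_rec A n
  have e2 : tm A (n + 2) = A * tm A (n + 1) / ((n : ℝ) + 2) := by
    rw [eq_div_iff (by positivity : ((n : ℝ) + 2) ≠ 0)]
    have h := tm_rec A (n + 1)
    push_cast at h
    linear_combination -h
  have e5 : Mm A n = ((n : ℝ) + 1) * sg A (n + 1) - A * sg A n := by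
    linear_combination key_id hA n
  have hid : ((n : ℝ) + 2) * A *
        (tm A n * sg A (n + 1) * sg A (n + 2)
          + tm A (n + 2) * sg A n * sg A (n + 1)
          - 2 * tm A (n + 1) * sg A n * sg A (n + 2))
      = tm A (n + 1) * slk A n := by
    unfold slk
    rw [e5, sg_succ A (n + 1), e2, e1, sg_succ A n]
    field_simp
    ring
  have hE : 0 ≤ tm A n * sg A (n + 1) * sg A (n + 2)
      + tm A (n + 2) * sg A n * sg A (n + 1)
      - 2 * tm A (n + 1) * sg A n * sg A (n + 2) := by
    have h0 : 0 ≤ ((n : ℝ) + 2) * A *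
        (tm A n * sg A (n + 1) * sg A (n + 2)
          + tm A (n + 2) * sg A n * sg A (n + 1)
          - 2 * tm A (n + 1) * sg A n * sg A (n + 2)) := by
      rw [hid]
      exact mul_nonneg ht1p.le (slk_nonneg hA n)
    exact nonneg_of_mul_nonneg_right h0 (by positivity)
  have heq : ErlangB A n + ErlangB A (n + 2) - 2 * ErlangB A (n + 1)
      = (tm A n * sg A (n + 1) * sg A (n + 2)
          + tm A (n + 2) * sg A n * sg A (n + 1)
          - 2 * tm A (n + 1) * sg A n * sg A (n + 2)) / (sg A n * sg A (n + 1) * sg A (n + 2)) := by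
    rw [erlangB_eq, erlangB_eq, erlangB_eq]
    field_simp
  have hfin : 0 ≤ ErlangB A n + ErlangB A (n + 2) - 2 * ErlangB A (n + 1) := by
    rw [heq]
    positivity
  linarith

lemma erlang_diff_anti {A : ℝ} (hA : 0 < A) {m n : ℕ} (h : m ≤ n) :
    ErlangB A n - ErlangB A (n + 1) ≤ ErlangB A m - ErlangB A (m + 1) := by
  induction n with
  | zero =>
    have : m = 0 := Nat.le_zero.mp h
    subst this
    exact le_refl _
  | succ n ih =>
    rcases Nat.lt_or_ge m (n + 1) with hm | hm
    · have h1 := ih (Nat.lt_succ_iff.mp hm)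
      have h2 := erlang_convex hA n
      linarith
    · have : m = n + 1 := le_antisymm h hm
      subst this
      exact le_refl _

end ErlangAux

/-- (Theorem 1, submodularity) With pairwise disjoint candidate-session sets `V p` whose
union is `Vall`, offered loads `A p > 0` and weights `w p ≥ 0`, the objective
`f(S) = ∑_p w p · (1 − B(|S ∩ V p|, A p))` is submodular: for all `S ⊆ T ⊆ Vall` and
`v ∈ Vall \ T`, `f(T ∪ {v}) − f(T) ≤ f(S ∪ {v}) − f(S)`. -/
theorem objective_submodular {α : Type*} [DecidableEq α] (P : ℕ)
    (V : Fin P → Finset α) (hdisj : ∀ p q : Fin P, p ≠ q → Disjoint (V p) (V q))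
    (Vall : Finset α) (hV : Vall = Finset.univ.biUnion V)
    (A : Fin P → ℝ) (hA : ∀ p, 0 < A p)
    (w : Fin P → ℝ) (hw : ∀ p, 0 ≤ w p)
    (S T : Finset α) (hST : S ⊆ T) (hT : T ⊆ Vall)
    (v : α) (hv : v ∈ Vall) (hvT : v ∉ T) :
    (∑ p, w p * (1 - ErlangB (A p) ((insert v T ∩ V p).card))) -
        (∑ p, w p * (1 - ErlangB (A p) ((T ∩ V p).card))) ≤
      (∑ p, w p * (1 - ErlangB (A p) ((insert v S ∩ V p).card))) -
        (∑ p, w p * (1 - ErlangB (A p) ((S ∩ V p).card))) := by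
  obtain ⟨p0, -, hvp0⟩ := Finset.mem_biUnion.mp (hV ▸ hv)
  have hvS : v ∉ S := fun h => hvT (hST h)
  have hvnot : ∀ p : Fin P, p ≠ p0 → v ∉ V p := fun p hp hmem =>
    (Finset.disjoint_left.mp (hdisj p p0 hp)) hmem hvp0
  rw [← Finset.sum_sub_distrib, ← Finset.sum_sub_distrib]
  have hL : (∑ p, (w p * (1 - ErlangB (A p) ((insert v T ∩ V p).card))
        - w p * (1 - ErlangB (A p) ((T ∩ V p).card))))
      = w p0 * (1 - ErlangB (A p0) (((T ∩ V p0).card + 1)))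
        - w p0 * (1 - ErlangB (A p0) ((T ∩ V p0).card)) := by
    rw [Finset.sum_eq_single_of_mem p0 (Finset.mem_univ p0)]
    · rw [Finset.insert_inter_of_mem hvp0,
        Finset.card_insert_of_notMem (fun h => hvT (Finset.mem_inter.mp h).1)]
    · intro p _ hp
      rw [Finset.insert_inter_of_notMem (hvnot p hp)]
      ring
  have hR : (∑ p, (w p * (1 - ErlangB (A p) ((insert v S ∩ V p).card))
        - w p * (1 - ErlangB (A p) ((S ∩ V p).card))))
      = w p0 * (1 - ErlangB (A p0) (((S ∩ V p0).card + 1)))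
        - w p0 * (1 - ErlangB (A p0) ((S ∩ V p0).card)) := by
    rw [Finset.sum_eq_single_of_mem p0 (Finset.mem_univ p0)]
    · rw [Finset.insert_inter_of_mem hvp0,
        Finset.card_insert_of_notMem (fun h => hvS (Finset.mem_inter.mp h).1)]
    · intro p _ hp
      rw [Finset.insert_inter_of_notMem (hvnot p hp)]
      ring
  rw [hL, hR]
  have hcard : (S ∩ V p0).card ≤ (T ∩ V p0).card :=
    Finset.card_le_card (Finset.inter_subset_inter hST (subset_refl (V p0)))
  have hdiff := ErlangAux.erlang_diff_anti (hA p0) hcard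
  have hw0 := hw p0
  nlinarith [hdiff, hw0, mul_le_mul_of_nonneg_left hdiff hw0]
end
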